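/- Let $\mathfrak{g}$ be a finite-dimensional real Lie algebra with $\mathrm{ad}$-invariant inner product, $\mathfrak{t}$ an abelian subalgebra, and $F : \mathfrak{g} \to \mathfrak{g}$ self-adjoint with image in $\mathfrak{t}$ and vanishing on $\mathfrak{t}^\perp$. Then for every $y \in \mathfrak{g}$ and every $s \in \mathbb{R}$, the linear map $e^{s\,\mathrm{ad}_{Fy}} - s\,\mathrm{ad}_y \circ F$ is a linear automorphism of $\mathfrak{g}$. -/

import Mathlib

open scoped RealInnerProductSpace

/-- With `𝔤`, `𝔱`, `F` as before, for every `y ∈ 𝔤` and `s ∈ ℝ`,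
the linear map `e^{s ad_{Fy}} - s (ad_y ∘ F)` is a linear automorphism of `𝔤`,
i.e. it is bijective. -/
theorem exp_sub_s_ad_y_F_bijective
    {g : Type*} [NormedAddCommGroup g] [InnerProductSpace ℝ g] [FiniteDimensional ℝ g]
    (l : g →ₗ[ℝ] g →ₗ[ℝ] g)
    (hlalt : ∀ X : g, l X X = 0)
    (hljac : ∀ X Y Z : g, l X (l Y Z) = l (l X Y) Z + l Y (l X Z))
    (hinv : ∀ X Y Z : g, ⟪l X Y, Z⟫ + ⟪Y, l X Z⟫ = 0)
    (t : Submodule ℝ g)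
    (htsub : ∀ A ∈ t, ∀ B ∈ t, l A B ∈ t)
    (habelian : ∀ A ∈ t, ∀ B ∈ t, l A B = 0)
    (F : g →ₗ[ℝ] g)
    (hFsa : ∀ v w : g, ⟪F v, w⟫ = ⟪v, F w⟫)
    (hFim : ∀ v : g, F v ∈ t)
    (hFperp : ∀ v ∈ tᗮ, F v = 0)
    (y : g) (s : ℝ) :
    Function.Bijective
      (fun V : g =>
        NormedSpace.exp (s • LinearMap.toContinuousLinearMap (l (F y))) V
          - s • l y (F V)) := by
  set A : g →L[ℝ] g := s • LinearMap.toContinuousLinearMap (l (F y)) with hA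
  set E : g →L[ℝ] g := NormedSpace.exp A with hE
  set T : g →ₗ[ℝ] g := E.toLinearMap - s • ((l y).comp F) with hT
  have hfun : (fun V : g =>
      NormedSpace.exp (s • LinearMap.toContinuousLinearMap (l (F y))) V
        - s • l y (F V)) = ⇑T := by
    funext V
    simp [hT, hE, hA]
  rw [hfun]
  -- F kills the range of A
  have hFA : ∀ w : g, F (A w) = 0 := by
    intro w
    have hmem : A w ∈ tᗮ := by
      rw [Submodule.mem_orthogonal']
      intro u hu
      have h1 : l (F y) u = 0 := habelian (F y) (hFim y) u hu
      have h2 := hinv (F y) w u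
      rw [h1] at h2
      simp only [inner_zero_right, add_zero] at h2
      have h3 : (inner ℝ (A w) u : ℝ) = s * inner ℝ (l (F y) w) u := by
        simp [hA, real_inner_smul_left]
      rw [h3, h2]
      ring
    exact hFperp _ hmem
  -- F ∘ E = F
  have hFE : ∀ V : g, F (E V) = F V := by
    intro V
    have hsum : Summable (fun n : ℕ => ((n.factorial : ℝ))⁻¹ • A ^ n) :=
      NormedSpace.expSeries_summable' A
    have hEV : E V = ∑' n : ℕ, ((n.factorial : ℝ))⁻¹ • (A ^ n) V := by
      rw [hE, NormedSpace.exp_eq_tsum ℝ]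
      have h := (ContinuousLinearMap.apply ℝ g V).map_tsum hsum
      simpa using h
    have hsum' : Summable (fun n : ℕ => ((n.factorial : ℝ))⁻¹ • (A ^ n) V) := by
      have h := hsum.map (ContinuousLinearMap.apply ℝ g V)
        (ContinuousLinearMap.apply ℝ g V).continuous
      exact h
    have hmap : F (E V) = ∑' n : ℕ, ((n.factorial : ℝ))⁻¹ • F ((A ^ n) V) := by
      rw [hEV]
      have h2 := (LinearMap.toContinuousLinearMap F).map_tsum hsum'
      simpa using h2
    rw [hmap, tsum_eq_single 0]
    · simp
    · intro n hn
      obtain ⟨m, rfl⟩ := Nat.exists_eq_succ_of_ne_zero hn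
      have hpow : (A ^ (m + 1)) V = A ((A ^ m) V) := by
        rw [pow_succ']; rfl
      rw [hpow, hFA]
      simp
  -- injectivity
  have hinj : Function.Injective T := by
    rw [← LinearMap.ker_eq_bot, LinearMap.ker_eq_bot']
    intro V hV
    have hV0 : E V - s • l y (F V) = 0 := by
      have : T V = E V - s • l y (F V) := by simp [hT]
      rw [← this]; exact hV
    have hV' : E V = s • l y (F V) := sub_eq_zero.mp hV0
    have hW : F V = s • F (l y (F V)) := by
      have h := hFE V
      rw [hV', map_smul] at h
      exact h.symm
    set W := F V with hWdef
    have hskew : l y W = - l W y := by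
      have h := hlalt (y + W)
      simp only [map_add, LinearMap.add_apply, hlalt y, hlalt W, zero_add, add_zero] at h
      exact eq_neg_of_add_eq_zero_right h
    have hWW : (⟪W, W⟫ : ℝ) = 0 := by
      have h1 : (⟪W, W⟫ : ℝ) = s * ⟪F (l y W), W⟫ := by
        nth_rewrite 1 [hW]
        rw [real_inner_smul_left]
      have h2 : (⟪F (l y W), W⟫ : ℝ) = ⟪l y W, F W⟫ := hFsa _ _
      have h3 : (⟪l y W, F W⟫ : ℝ) = - ⟪l W y, F W⟫ := by
        rw [hskew, inner_neg_left]
      have h4 : (⟪l W y, F W⟫ : ℝ) = - ⟪y, l W (F W)⟫ := by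
        have h := hinv W y (F W); linarith
      have h5 : l W (F W) = 0 := habelian W (hFim V) (F W) (hFim W)
      rw [h1, h2, h3, h4, h5]
      simp
    have hW0 : W = 0 := inner_self_eq_zero.mp hWW
    have hEV0 : E V = 0 := by
      rw [hV', hW0, map_zero, smul_zero]
    have hmul : NormedSpace.exp (-A) * NormedSpace.exp A = 1 := by
      rw [← NormedSpace.exp_add_of_commute_of_mem_ball (𝕂 := ℝ) (Commute.neg_left (Commute.refl A)) ((NormedSpace.expSeries_radius_eq_top ℝ (g →L[ℝ] g)).symm ▸ edist_lt_top _ _) ((NormedSpace.expSeries_radius_eq_top ℝ (g →L[ℝ] g)).symm ▸ edist_lt_top _ _)]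
      simp
    calc V = (NormedSpace.exp (-A) * E) V := by rw [hE, hmul]; simp
    _ = NormedSpace.exp (-A) (E V) := by rw [ContinuousLinearMap.mul_apply]
    _ = 0 := by rw [hEV0, map_zero]
  exact ⟨hinj, LinearMap.injective_iff_surjective.mp hinj⟩
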